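/- Under the random-intercept crossed effects design: (i) for every index c, the off-diagonal row sum of U satisfies ∑_{c'≠c} U[c,c'] = K·U[c,c]; hence, with A = U − Diag(U) and D = K·Diag(U), one has Ū := Diag(U)^{−1/2} U Diag(U)^{−1/2} = I_p + K·(D^{−1/2} A D^{−1/2}). (ii) If K ≥ 2, the same holds for the restricted matrices: for every index c of U^(r), ∑_{c'≠c} U^(r)[c,c'] = (K−1)·U^(r)[c,c], and Ū^(r) := Diag(U^(r))^{−1/2} U^(r) Diag(U^(r))^{−1/2} = I_{p−1} + (K−1)·Ā^(r). -/

import Mathlib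

open Matrix

namespace Crossed

/-- Coordinates: `none` is the intercept `θ₀`, `some ⟨k, a⟩` is level `a` of factor `k`. -/
abbrev Idx (K : ℕ) (G : Fin K → ℕ) := Option (Σ k : Fin K, Fin (G k))

/-- Coordinates of the random effects only (intercept removed). -/
abbrev Lvl (K : ℕ) (G : Fin K → ℕ) := Σ k : Fin K, Fin (G k)

/-- The design matrix `V ∈ ℝ^{N×p}`. -/
noncomputable def V (K N : ℕ) (G : Fin K → ℕ) (g : Fin N → ∀ k : Fin K, Fin (G k)) :
    Matrix (Fin N) (Idx K G) ℝ :=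
  fun i c => c.elim 1 (fun s => if g i s.1 = s.2 then 1 else 0)

/-- `U = Vᵀ V`. -/
noncomputable def U (K N : ℕ) (G : Fin K → ℕ) (g : Fin N → ∀ k : Fin K, Fin (G k)) :
    Matrix (Idx K G) (Idx K G) ℝ :=
  (V K N G g)ᵀ * V K N G g

/-- `Ū = Diag(U)^{−1/2} U Diag(U)^{−1/2}`. -/
noncomputable def Ubar (K N : ℕ) (G : Fin K → ℕ) (g : Fin N → ∀ k : Fin K, Fin (G k)) :
    Matrix (Idx K G) (Idx K G) ℝ :=
  diagonal (fun c => (Real.sqrt (U K N G g c c))⁻¹) * U K N G g *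
    diagonal (fun c => (Real.sqrt (U K N G g c c))⁻¹)

/-- The restricted design matrix `V^(r)` (intercept column removed). -/
noncomputable def Vr (K N : ℕ) (G : Fin K → ℕ) (g : Fin N → ∀ k : Fin K, Fin (G k)) :
    Matrix (Fin N) (Lvl K G) ℝ :=
  fun i s => if g i s.1 = s.2 then 1 else 0

/-- `U^(r) = (V^(r))ᵀ V^(r)`. -/
noncomputable def Ur (K N : ℕ) (G : Fin K → ℕ) (g : Fin N → ∀ k : Fin K, Fin (G k)) :
    Matrix (Lvl K G) (Lvl K G) ℝ :=
  (Vr K N G g)ᵀ * Vr K N G g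

/-- `A^(r) = U^(r) − Diag(U^(r))`. -/
noncomputable def Ar (K N : ℕ) (G : Fin K → ℕ) (g : Fin N → ∀ k : Fin K, Fin (G k)) :
    Matrix (Lvl K G) (Lvl K G) ℝ :=
  Ur K N G g - diagonal (fun c => Ur K N G g c c)

/-- `A = U − Diag(U)` (full, intercept included). -/
noncomputable def A (K N : ℕ) (G : Fin K → ℕ) (g : Fin N → ∀ k : Fin K, Fin (G k)) :
    Matrix (Idx K G) (Idx K G) ℝ :=
  U K N G g - diagonal (fun c => U K N G g c c)

section Aux

variable (K N : ℕ) (G : Fin K → ℕ) (g : Fin N → ∀ k : Fin K, Fin (G k))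

lemma Vsq (i : Fin N) (c : Idx K G) : V K N G g i c * V K N G g i c = V K N G g i c := by
  rcases c with _ | s <;> simp [V] <;> split <;> simp_all

lemma Vrsq (i : Fin N) (c : Lvl K G) : Vr K N G g i c * Vr K N G g i c = Vr K N G g i c := by
  simp only [Vr]; split <;> simp

lemma Vrsum (i : Fin N) : ∑ c : Lvl K G, Vr K N G g i c = (K : ℝ) := by
  rw [show ∑ c : Lvl K G, Vr K N G g i c
      = ∑ k, ∑ a, Vr K N G g i ⟨k, a⟩ from
    Finset.sum_sigma Finset.univ (fun _ => Finset.univ) _]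
  simp [Vr]

lemma Vsum (i : Fin N) : ∑ c : Idx K G, V K N G g i c = 1 + (K : ℝ) := by
  rw [Fintype.sum_option]
  have : ∀ s : Lvl K G, V K N G g i (some s) = Vr K N G g i s := fun s => rfl
  simp only [this, Vrsum]
  simp [V]

lemma Udiag (c : Idx K G) : U K N G g c c = ∑ i, V K N G g i c := by
  simp [U, Matrix.mul_apply, transpose_apply, Vsq]

lemma Urdiag (c : Lvl K G) : Ur K N G g c c = ∑ i, Vr K N G g i c := by
  simp [Ur, Matrix.mul_apply, transpose_apply, Vrsq]

lemma Udiag_pos (hN : 1 ≤ N) (hobs : ∀ (k : Fin K) (a : Fin (G k)), ∃ i, g i k = a)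
    (c : Idx K G) : 0 < U K N G g c c := by
  rw [Udiag]
  rcases c with _ | ⟨k, a⟩
  · have : ∀ i : Fin N, V K N G g i none = 1 := fun _ => rfl
    simp [this]
    omega
  · obtain ⟨i, hi⟩ := hobs k a
    have h1 : V K N G g i (some ⟨k, a⟩) = 1 := by simp [V, hi]
    have : (1 : ℝ) ≤ ∑ j, V K N G g j (some ⟨k, a⟩) := by
      rw [← h1]
      apply Finset.single_le_sum (f := fun j => V K N G g j (some ⟨k, a⟩))
        (fun j _ => ?_) (Finset.mem_univ i)
      rcases eq_or_ne (g j k) a with h | h <;> simp [V, h]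
    linarith

lemma Urdiag_pos (hobs : ∀ (k : Fin K) (a : Fin (G k)), ∃ i, g i k = a)
    (c : Lvl K G) : 0 < Ur K N G g c c := by
  obtain ⟨k, a⟩ := c
  rw [Urdiag]
  obtain ⟨i, hi⟩ := hobs k a
  have h1 : Vr K N G g i ⟨k, a⟩ = 1 := by simp [Vr, hi]
  have : (1 : ℝ) ≤ ∑ j, Vr K N G g j ⟨k, a⟩ := by
    rw [← h1]
    apply Finset.single_le_sum (f := fun j => Vr K N G g j ⟨k, a⟩)
      (fun j _ => ?_) (Finset.mem_univ i)
    rcases eq_or_ne (g j k) a with h | h <;> simp [Vr, h]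
  linarith

lemma sqrt_arith (t x y u : ℝ) (ht : 0 < t) (hx : 0 < x) (hy : 0 < y) :
    t * ((Real.sqrt (t * x))⁻¹ * u * (Real.sqrt (t * y))⁻¹)
      = (Real.sqrt x)⁻¹ * u * (Real.sqrt y)⁻¹ := by
  rw [Real.sqrt_mul ht.le, Real.sqrt_mul ht.le, mul_inv, mul_inv]
  have h1 : Real.sqrt t ≠ 0 := by positivity
  have h2 : Real.sqrt t * Real.sqrt t = t := Real.mul_self_sqrt ht.le
  field_simp
  rw [Real.sq_sqrt ht.le]

lemma inv_sqrt_mul (x : ℝ) (hx : 0 < x) :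
    (Real.sqrt x)⁻¹ * x * (Real.sqrt x)⁻¹ = 1 := by
  have h : Real.sqrt x ≠ 0 := by positivity
  field_simp
  rw [Real.sq_sqrt hx.le]

lemma Utot (c : Idx K G) :
    ∑ c' : Idx K G, U K N G g c c' = (1 + (K : ℝ)) * U K N G g c c := by
  rw [Udiag]
  simp only [U, Matrix.mul_apply, transpose_apply]
  rw [Finset.sum_comm, Finset.mul_sum]
  refine Finset.sum_congr rfl fun i _ => ?_
  rw [← Finset.mul_sum, Vsum]
  ring

lemma Urtot (c : Lvl K G) :
    ∑ c' : Lvl K G, Ur K N G g c c' = (K : ℝ) * Ur K N G g c c := by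
  rw [Urdiag]
  simp only [Ur, Matrix.mul_apply, transpose_apply]
  rw [Finset.sum_comm, Finset.mul_sum]
  refine Finset.sum_congr rfl fun i _ => ?_
  rw [← Finset.mul_sum, Vrsum]
  ring

end Aux

/-- (i) each off-diagonal row sum of `U` equals `K` times the diagonal entry, hence
`Ū = I + K·(D^{−1/2} A D^{−1/2})` with `A = U − Diag(U)` and `D = K·Diag(U)`;
(ii) for `K ≥ 2` the same holds for the restricted matrices with `K − 1` in place
of `K`. -/
theorem rowsum_and_normalized_decomposition (K N : ℕ) (G : Fin K → ℕ)
    (g : Fin N → ∀ k : Fin K, Fin (G k))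
    (hK : 1 ≤ K) (hGk : ∀ k, 1 ≤ G k) (hN : 1 ≤ N)
    (hobs : ∀ (k : Fin K) (a : Fin (G k)), ∃ i, g i k = a) :
    ((∀ c : Idx K G,
        ∑ c' ∈ Finset.univ.filter (fun c' => c' ≠ c), U K N G g c c'
          = (K : ℝ) * U K N G g c c) ∧
      Ubar K N G g = 1 + (K : ℝ) •
        (diagonal (fun c => (Real.sqrt ((K : ℝ) * U K N G g c c))⁻¹) * A K N G g *
          diagonal (fun c => (Real.sqrt ((K : ℝ) * U K N G g c c))⁻¹))) ∧
    (2 ≤ K →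
      (∀ c : Lvl K G,
        ∑ c' ∈ Finset.univ.filter (fun c' => c' ≠ c), Ur K N G g c c'
          = ((K : ℝ) - 1) * Ur K N G g c c) ∧
      diagonal (fun c => (Real.sqrt (Ur K N G g c c))⁻¹) * Ur K N G g *
          diagonal (fun c => (Real.sqrt (Ur K N G g c c))⁻¹)
        = 1 + ((K : ℝ) - 1) •
          (diagonal (fun c => (Real.sqrt (((K : ℝ) - 1) * Ur K N G g c c))⁻¹) *
            Ar K N G g *
            diagonal (fun c => (Real.sqrt (((K : ℝ) - 1) * Ur K N G g c c))⁻¹))) := by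
  have hKpos : (0 : ℝ) < K := by exact_mod_cast hK
  refine ⟨⟨fun c => ?_, ?_⟩, fun hK2 => ⟨fun c => ?_, ?_⟩⟩
  · rw [Finset.filter_ne', Finset.sum_erase_eq_sub (Finset.mem_univ c), Utot]
    ring
  · ext c c'
    simp only [Ubar, Matrix.mul_diagonal, Matrix.diagonal_mul, Matrix.add_apply,
      Matrix.smul_apply, Matrix.one_apply, smul_eq_mul]
    by_cases h : c = c'
    · subst h
      have hA : A K N G g c c = 0 := by simp [A]
      rw [hA, if_pos rfl]
      simp only [mul_zero, zero_mul]
      rw [inv_sqrt_mul _ (Udiag_pos K N G g hN hobs c)]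
      ring
    · have hA : A K N G g c c' = U K N G g c c' := by
        simp [A, Matrix.diagonal_apply_ne _ h]
      rw [hA, if_neg h, sqrt_arith (K : ℝ) _ _ _ hKpos
        (Udiag_pos K N G g hN hobs c) (Udiag_pos K N G g hN hobs c')]
      ring
  · rw [Finset.filter_ne', Finset.sum_erase_eq_sub (Finset.mem_univ c), Urtot]
    ring
  · have hK1 : (0 : ℝ) < (K : ℝ) - 1 := by
      have : (2 : ℝ) ≤ K := by exact_mod_cast hK2
      linarith
    ext c c'
    simp only [Matrix.mul_diagonal, Matrix.diagonal_mul, Matrix.add_apply,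
      Matrix.smul_apply, Matrix.one_apply, smul_eq_mul]
    by_cases h : c = c'
    · subst h
      have hA : Ar K N G g c c = 0 := by simp [Ar]
      rw [hA, if_pos rfl]
      simp only [mul_zero, zero_mul]
      rw [inv_sqrt_mul _ (Urdiag_pos K N G g hobs c)]
      ring
    · have hA : Ar K N G g c c' = Ur K N G g c c' := by
        simp [Ar, Matrix.diagonal_apply_ne _ h]
      rw [hA, if_neg h, sqrt_arith ((K : ℝ) - 1) _ _ _ hK1
        (Urdiag_pos K N G g hobs c) (Urdiag_pos K N G g hobs c')]
      ring

end Crossed
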